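/- Non-differentiability of Ψ for AA(1) in dimension n ≥ 1: assuming A = I - q'(x*) invertible and M = q'(x*) ≠ 0, there is no linear map T : ℝ²ⁿ → ℝ²ⁿ such that 𝔇Ψ(z*, d) = T d for all d, where 𝔇Ψ(z*, d) = [[(1+β̂(d))M, -β̂(d)M],[I,0]] d with β̂(d) = -⟨A d₁, A(d₁-d₂)⟩/‖A(d₁-d₂)‖² for d₁ ≠ d₂ and β̂(d) = 0 for d₁ = d₂. Consequently Ψ is not differentiable at z*. -/

import Mathlib

open scoped RealInnerProductSpace Topology
open Filter

noncomputable section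

abbrev E (n : ℕ) := EuclideanSpace ℝ (Fin n)

/-- The residual `r(x) = x - q(x)`. -/
def rr {n : ℕ} (q : E n → E n) (x : E n) : E n := x - q x

open Classical in
/-- The AA(1) coefficient `β(x,y)`. -/
def beta {n : ℕ} (q : E n → E n) (p : E n × E n) : ℝ :=
  if rr q p.1 = rr q p.2 then 0
  else -⟪rr q p.1, rr q p.1 - rr q p.2⟫ / ‖rr q p.1 - rr q p.2‖ ^ 2

/-- The AA(1) fixed-point iteration map `Ψ(x,y) = (q(x) + β(x,y)(q(x)-q(y)), x)`. -/
def Psi {n : ℕ} (q : E n → E n) (p : E n × E n) : E n × E n :=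
  (q p.1 + beta q p • (q p.1 - q p.2), p.1)

/-- Euclidean norm on the product `ℝⁿ × ℝⁿ ≅ ℝ²ⁿ`. -/
def pnorm {n : ℕ} (p : E n × E n) : ℝ := Real.sqrt (‖p.1‖ ^ 2 + ‖p.2‖ ^ 2)


open Classical in
/-- `β̂(d)`: the limiting AA(1) coefficient in direction `d = (d₁, d₂)`. -/
def betaHat {n : ℕ} (A : E n →L[ℝ] E n) (d : E n × E n) : ℝ :=
  if d.1 = d.2 then 0 else -⟪A d.1, A (d.1 - d.2)⟫ / ‖A (d.1 - d.2)‖ ^ 2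

/-- The Gateaux derivative map `d ↦ [[(1+β̂(d))M, -β̂(d)M],[I,0]]·d` of AA(1) at `z*`. -/
def GMap {n : ℕ} (M A : E n →L[ℝ] E n) (d : E n × E n) : E n × E n :=
  ((1 + betaHat A d) • M d.1 - betaHat A d • M d.2, d.1)

/-- non-differentiability of `Ψ` for AA(1): if `M = q'(x*) ≠ 0` and
`A = I - M` is invertible, then the directional derivative map `𝔇Ψ(z*,·)` is not linear
(no linear map `T` satisfies `𝔇Ψ(z*,d) = T d` for all `d`), and consequently `Ψ` is not
differentiable at `z* = (x*,x*)`. -/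
theorem stmt19 {n : ℕ} (q : E n → E n) (xs : E n) (hfix : q xs = xs)
    (M : E n →L[ℝ] E n) (hM : HasFDerivAt q M xs) (hM0 : M ≠ 0)
    (A : E n →L[ℝ] E n) (hA : A = ContinuousLinearMap.id ℝ (E n) - M)
    (hAinv : Function.Bijective A) :
    (¬ ∃ T : (E n × E n) →ₗ[ℝ] (E n × E n), ∀ d : E n × E n, GMap M A d = T d) ∧
    ¬ DifferentiableAt ℝ (Psi q) (xs, xs) := by
  -- pick v with M v ≠ 0
  obtain ⟨v, hv⟩ : ∃ v, M v ≠ 0 := by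
    by_contra h
    push_neg at h
    exact hM0 (ContinuousLinearMap.ext fun x => by simpa using h x)
  have hv0 : v ≠ 0 := fun h => hv (by simp [h])
  have hAv : A v ≠ 0 := fun h => hv0 (hAinv.1 (by simpa using h))
  -- key values of GMap
  have g1 : GMap M A (v, v) = (M v, v) := by
    simp [GMap, betaHat]
  have g2 : GMap M A (v, 0) = (0, v) := by
    have : betaHat A (v, (0 : E n)) = -1 := by
      simp only [betaHat, if_neg hv0, sub_zero]
      rw [real_inner_self_eq_norm_sq]
      have hne : ‖A v‖ ≠ 0 := norm_ne_zero_iff.2 hAv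
      field_simp
    simp [GMap, this]
  have g3 : GMap M A ((0 : E n), v) = (0, 0) := by
    have : betaHat A ((0 : E n), v) = 0 := by
      simp [betaHat, hv0.symm]
    simp [GMap, this]
  have part1 : ¬ ∃ T : (E n × E n) →ₗ[ℝ] (E n × E n),
      ∀ d : E n × E n, GMap M A d = T d := by
    rintro ⟨T, hT⟩
    have : GMap M A (v, v) = GMap M A (v, 0) + GMap M A (0, v) := by
      rw [hT, hT, hT, ← map_add]
      norm_num
    rw [g1, g2, g3] at this
    exact hv (by simpa using congrArg Prod.fst this)
  refine ⟨part1, fun hdiff => ?_⟩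
  set L := fderiv ℝ (Psi q) (xs, xs) with hL
  have hF : HasFDerivAt (Psi q) L (xs, xs) := hdiff.hasFDerivAt
  -- beta at (xs, y) is always 0
  have hrxs : rr q xs = 0 := by simp [rr, hfix]
  have hbxs : ∀ y, beta q (xs, y) = 0 := by
    intro y
    simp only [beta, hrxs]
    split <;> simp
  -- Psi (xs, y) = (xs, xs)
  have hPsi2 : ∀ y, Psi q (xs, y) = (xs, xs) := by
    intro y
    simp [Psi, hbxs, hfix]
  -- direction (0, v): line derivative is 0
  have hL3 : L (0, v) = 0 := by
    have h1 : HasDerivAt (fun t : ℝ => Psi q ((xs, xs) + t • ((0 : E n), v)))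
        (L (0, v)) 0 := hF.hasLineDerivAt ((0 : E n), v)
    have h2 : (fun t : ℝ => Psi q ((xs, xs) + t • ((0 : E n), v)))
        = fun _ => (xs, xs) := by
      funext t
      simpa using hPsi2 (xs + t • v)
    rw [h2] at h1
    exact h1.unique (hasDerivAt_const 0 _)
  -- direction (v, v): Psi (x, x) = (q x, x); line derivative is (M v, v)
  have hbsame : ∀ x, beta q (x, x) = 0 := fun x => by simp [beta]
  have hL1 : L (v, v) = (M v, v) := by
    have h1 : HasDerivAt (fun t : ℝ => Psi q ((xs, xs) + t • (v, v)))
        (L (v, v)) 0 := hF.hasLineDerivAt (v, v)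
    have h2 : (fun t : ℝ => Psi q ((xs, xs) + t • (v, v)))
        = fun t : ℝ => (q (xs + t • v), xs + t • v) := by
      funext t
      simp [Psi, hbsame]
    rw [h2] at h1
    have hline : HasDerivAt (fun t : ℝ => xs + t • v) v 0 := by
      simpa using ((hasDerivAt_id (0:ℝ)).smul_const v).const_add xs
    have hM' : HasFDerivAt q M (xs + (0:ℝ) • v) := by simpa using hM
    have hq : HasDerivAt (fun t : ℝ => q (xs + t • v)) (M v) 0 :=
      hM'.comp_hasDerivAt (0:ℝ) hline
    exact h1.unique (hq.prodMk hline)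
  -- direction (v, 0): eventually Psi (xs + t v, xs) = (xs, xs + t v)
  have hL2 : L (v, 0) = (0, v) := by
    have h1 : HasDerivAt (fun t : ℝ => Psi q ((xs, xs) + t • (v, (0 : E n))))
        (L (v, 0)) 0 := hF.hasLineDerivAt (v, (0 : E n))
    -- rr q (xs + t v) ≠ 0 for t ≠ 0 near 0
    have hrderiv : HasDerivAt (fun t : ℝ => rr q (xs + t • v)) (A v) 0 := by
      have hline : HasDerivAt (fun t : ℝ => xs + t • v) v 0 := by
        simpa using ((hasDerivAt_id (0:ℝ)).smul_const v).const_add xs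
      have hM' : HasFDerivAt q M (xs + (0:ℝ) • v) := by simpa using hM
      have hq : HasDerivAt (fun t : ℝ => q (xs + t • v)) (M v) 0 :=
        hM'.comp_hasDerivAt (0:ℝ) hline
      have := hline.sub hq
      have h3 : A v = v - M v := by simp [hA]
      rw [h3]; exact this
    have hne : ∀ᶠ t in 𝓝[≠] (0:ℝ), rr q (xs + t • v) ≠ rr q (xs + (0:ℝ) • v) :=
      hrderiv.eventually_ne hAv
    have heq : (fun t : ℝ => Psi q ((xs, xs) + t • (v, (0 : E n))))
        =ᶠ[𝓝 (0:ℝ)] fun t : ℝ => (xs, xs + t • v) := by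
      have h0 : rr q (xs + (0:ℝ) • v) = 0 := by simpa using hrxs
      rw [Filter.EventuallyEq, ← nhdsNE_sup_pure (0:ℝ),
        eventually_sup]
      constructor
      · filter_upwards [hne] with t ht
        rw [h0] at ht
        have hβ : beta q (xs + t • v, xs) = -1 := by
          simp only [beta, hrxs, sub_zero]
          rw [if_neg ht, real_inner_self_eq_norm_sq]
          have : ‖rr q (xs + t • v)‖ ≠ 0 := norm_ne_zero_iff.2 ht
          field_simp
        simp only [Prod.smul_mk, Prod.mk_add_mk, smul_zero, add_zero, Psi, hβ, hfix]
        rw [Prod.mk.injEq]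
        constructor
        · module
        · rfl
      · rw [eventually_pure]
        simpa using hPsi2 xs
    rw [heq.hasDerivAt_iff] at h1
    have hline2 : HasDerivAt (fun t : ℝ => ((xs : E n), xs + t • v))
        (((0 : E n), v)) 0 :=
      (hasDerivAt_const (0:ℝ) xs).prodMk
        (by simpa using ((hasDerivAt_id (0:ℝ)).smul_const v).const_add xs)
    exact h1.unique hline2
  -- contradiction via linearity of L
  have hsum : L (v, v) = L (v, 0) + L (0, v) := by
    rw [← map_add]
    norm_num
  rw [hL1, hL2, hL3] at hsum
  exact hv (by simpa using congrArg Prod.fst hsum)
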